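/- Fix q ∈ ℝ^d with q ≠ 0, η > 0, and x ∈ ℝ^d with p = ⟨q, x⟩ > 0. Consider the logarithmic loss with label y = 1 over linear predictors, ℓ(w) = −ln(⟨q,w⟩) for ⟨q,w⟩ > 0 and ℓ(w) = +∞ otherwise, with conjugate ℓ*(z) = sup_w (⟨z,w⟩ − ℓ(w)), and define H(z) = (η/2)‖x/η − z‖² + ℓ*(z). Let g = −(1/p) q and let z = (1/η) s(1) q where s(1) = (p − √(p² + 2 η ‖q‖²)) / ‖q‖² is the IWA scaling. Then H(z) ≤ H(g). -/

import Mathlib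

open scoped RealInnerProductSpace

lemma iwa_aux_log (c t : ℝ) (hc : c < 0) (ht : 0 < t) :
    c * t + Real.log t ≤ -1 - Real.log (-c) := by
  have h := Real.log_le_sub_one_of_pos (show (0:ℝ) < t * (-c) from mul_pos ht (by linarith))
  rw [Real.log_mul (ne_of_gt ht) (by linarith)] at h
  linarith

set_option maxHeartbeats 1000000 in
/-- The IWA dual vector for the logarithmic loss with label `y = 1` over linear
predictors, `ℓ(w) = -ln(⟨q,w⟩)` for `⟨q,w⟩ > 0` and `+∞` otherwise, satisfies
`H(z) ≤ H(g)`, where `g = -(1/p) q` is the gradient at `x`,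
`z = (1/η) s(1) q` with `s(1) = (p - √(p² + 2η‖q‖²))/‖q‖²` the IWA scaling, and
`H(z) = (η/2)‖x/η - z‖² + ℓ*(z)`. -/
theorem iwa_log_loss_H_le
    (d : ℕ) (q : EuclideanSpace ℝ (Fin d)) (hq : q ≠ 0) (η : ℝ) (hη : 0 < η)
    (x : EuclideanSpace ℝ (Fin d)) (p : ℝ) (hp : p = ⟪q, x⟫) (hppos : 0 < p)
    (ℓ : EuclideanSpace ℝ (Fin d) → EReal)
    (hℓ : ∀ w, ℓ w = if 0 < ⟪q, w⟫ then (((-Real.log ⟪q, w⟫ : ℝ)) : EReal) else ⊤)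
    (lstar : EuclideanSpace ℝ (Fin d) → EReal)
    (hlstar : ∀ zz, lstar zz = ⨆ w, ((⟪zz, w⟫ : ℝ) : EReal) - ℓ w)
    (H : EuclideanSpace ℝ (Fin d) → EReal)
    (hH : ∀ zz, H zz = ((η / 2 * ‖η⁻¹ • x - zz‖ ^ 2 : ℝ) : EReal) + lstar zz)
    (g z : EuclideanSpace ℝ (Fin d))
    (hg : g = (-p⁻¹) • q)
    (hz : z = (η⁻¹ * ((p - Real.sqrt (p ^ 2 + 2 * η * ‖q‖ ^ 2)) / ‖q‖ ^ 2)) • q) :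
    H z ≤ H g := by
  have hq' : (0:ℝ) < ‖q‖ := norm_pos_iff.mpr hq
  have hQ : (0:ℝ) < ‖q‖ ^ 2 := by positivity
  set Q : ℝ := ‖q‖ ^ 2 with hQdef
  set R : ℝ := Real.sqrt (p ^ 2 + 2 * η * Q) with hRdef
  have hR2 : R ^ 2 = p ^ 2 + 2 * η * Q := Real.sq_sqrt (by nlinarith [sq_nonneg p])
  have hRnn : 0 ≤ R := Real.sqrt_nonneg _
  have hRgt : p < R := by nlinarith
  set cz : ℝ := η⁻¹ * ((p - R) / Q) with hczdef
  set cg : ℝ := -p⁻¹ with hcgdef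
  have hczneg : cz < 0 := by
    have h1 : (p - R) / Q < 0 := div_neg_of_neg_of_pos (by linarith) hQ
    exact mul_neg_of_pos_of_neg (by positivity) h1
  have hcgneg : cg < 0 := by
    rw [hcgdef]; linarith [inv_pos.2 hppos]
  -- the conjugate of the log loss at a negative multiple of q
  have key : ∀ c : ℝ, c < 0 → lstar (c • q) = ((-1 - Real.log (-c) : ℝ) : EReal) := by
    intro c hc
    rw [hlstar]
    apply le_antisymm
    · apply iSup_le
      intro w
      rw [hℓ]
      by_cases hw : 0 < ⟪q, w⟫
      · simp only [hw, if_true]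
        rw [real_inner_smul_left, ← EReal.coe_sub]
        apply EReal.coe_le_coe_iff.2
        have := iwa_aux_log c ⟪q, w⟫ hc hw
        linarith
      · simp only [hw, if_false]
        rw [sub_eq_add_neg]
        simp
    · have hcne : c ≠ 0 := ne_of_lt hc
      have hQne' : Q ≠ 0 := ne_of_gt hQ
      have hw0 : ⟪q, (-(c * Q))⁻¹ • q⟫ = -c⁻¹ := by
        rw [real_inner_smul_right, real_inner_self_eq_norm_sq, ← hQdef]
        field_simp
      have hterm : ((⟪c • q, (-(c * Q))⁻¹ • q⟫ : ℝ) : EReal) - ℓ ((-(c * Q))⁻¹ • q)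
          = ((-1 - Real.log (-c) : ℝ) : EReal) := by
        have h1 : ⟪c • q, (-(c * Q))⁻¹ • q⟫ = (-1 : ℝ) := by
          rw [real_inner_smul_left, hw0]
          rw [show c * -c⁻¹ = -(c/c) by ring, div_self hcne]
        have h2 : (0:ℝ) < -c⁻¹ := by
          simp only [← inv_neg]; exact inv_pos.2 (by linarith)
        rw [h1, hℓ, hw0, if_pos h2]
        have h3 : Real.log (-c⁻¹) = -Real.log (-c) := by
          rw [show -c⁻¹ = (-c)⁻¹ by ring, Real.log_inv]
        rw [h3, ← EReal.coe_sub]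
        norm_num
      calc ((-1 - Real.log (-c) : ℝ) : EReal)
          = ((⟪c • q, (-(c * Q))⁻¹ • q⟫ : ℝ) : EReal) - ℓ ((-(c * Q))⁻¹ • q) := hterm.symm
        _ ≤ _ := le_iSup (fun w => ((⟪c • q, w⟫ : ℝ) : EReal) - ℓ w) _
  -- rewrite H z and H g as real numbers
  have hHz : H z = ((η / 2 * ‖η⁻¹ • x - z‖ ^ 2 + (-1 - Real.log (-cz)) : ℝ) : EReal) := by
    rw [hH, hz, key cz hczneg, ← EReal.coe_add]
  have hHg : H g = ((η / 2 * ‖η⁻¹ • x - g‖ ^ 2 + (-1 - Real.log (-cg)) : ℝ) : EReal) := by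
    rw [hH, hg, key cg hcgneg, ← EReal.coe_add]
  rw [hHz, hHg]
  apply EReal.coe_le_coe_iff.2
  -- expand the squared norms
  have hnc : ∀ c : ℝ, ‖c • q‖ ^ 2 = c ^ 2 * Q := by
    intro c; rw [norm_smul, mul_pow, Real.norm_eq_abs, sq_abs, ← hQdef]
  have expand : ∀ c : ℝ, ‖η⁻¹ • x - c • q‖ ^ 2
      = ‖η⁻¹ • x‖ ^ 2 - 2 * (η⁻¹ * (c * p)) + c ^ 2 * Q := by
    intro c
    rw [norm_sub_sq_real, real_inner_smul_left, real_inner_smul_right, real_inner_comm, ← hp,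
      hnc]
  rw [hz, hg, expand cz, expand cg]
  have hQne : Q ≠ 0 := ne_of_gt hQ
  have hηne : η ≠ 0 := ne_of_gt hη
  have hpne : p ≠ 0 := ne_of_gt hppos
  -- the quadratic part at cz equals 1
  have hsumz : -(cz * p) + η / 2 * (cz ^ 2 * Q) = 1 := by
    rw [hczdef]
    field_simp
    nlinarith [hR2]
  -- log identities
  have hRppos : (0:ℝ) < R + p := by linarith
  have hRP : (R - p) * (R + p) = 2 * η * Q := by nlinarith [hR2]
  have hcz2 : -cz = 2 / (R + p) := by
    rw [hczdef, eq_div_iff (ne_of_gt hRppos)]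
    field_simp
    linear_combination hRP
  set L : ℝ := Real.log ((R + p) / (2 * p)) with hLdef
  have hL : L ≤ (R + p) / (2 * p) - 1 := Real.log_le_sub_one_of_pos (by positivity)
  have hlogcz : Real.log (-cz) = -(L + Real.log p) := by
    rw [hcz2, show (2:ℝ) / (R + p) = (((R + p) / (2 * p)) * p)⁻¹ by field_simp,
      Real.log_inv, Real.log_mul (by positivity) hpne]
  have hlogcg : Real.log (-cg) = -Real.log p := by
    rw [hcgdef, neg_neg, Real.log_inv]
  rw [hlogcz, hlogcg]
  -- final arithmetic
  have ework : ∀ c : ℝ, η / 2 * (‖η⁻¹ • x‖ ^ 2 - 2 * (η⁻¹ * (c * p)) + c ^ 2 * Q)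
      = η / 2 * ‖η⁻¹ • x‖ ^ 2 + (-(c * p) + η / 2 * (c ^ 2 * Q)) := by
    intro c
    have hηη : η * η⁻¹ = 1 := mul_inv_cancel₀ hηne
    linear_combination (-(c * p)) * hηη
  rw [ework cz, ework cg, hsumz]
  have hLbound : L ≤ η * Q / (2 * p ^ 2) := by
    have h2 : (R - p) / (2 * p) ≤ η * Q / (2 * p ^ 2) := by
      rw [div_le_div_iff₀ (by positivity) (by positivity)]
      have hkey : η * Q * (2 * p) - (R - p) * (2 * p ^ 2) = p * (R - p) ^ 2 := by
        linear_combination (-p) * hR2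
      nlinarith [mul_nonneg hppos.le (sq_nonneg (R - p))]
    have h3 : (R + p) / (2 * p) - 1 = (R - p) / (2 * p) := by field_simp; ring
    linarith
  have hcg2 : -(cg * p) + η / 2 * (cg ^ 2 * Q) = 1 + η * Q / (2 * p ^ 2) := by
    rw [hcgdef]; field_simp
  rw [hcg2]
  linarith [hLbound]
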